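/- Let n ≥ 1 and k ≥ 1, and for each i = 1, …, k let a_i = (a_{i,1}, …, a_{i,n}) ∈ ℝⁿ satisfy 1 > a_{i,1} > a_{i,2} > ⋯ > a_{i,n} ≥ 0 (setting a_{i,0} := 1), with A_i the companion matrix of a_i. Let ε = max over 1 ≤ i ≤ k and 1 ≤ j ≤ n of a_{i,j} / a_{i,j−1} (all denominators are positive by the strict chain); then ε < 1 and every eigenvalue μ ∈ ℂ of the product A_k A_{k−1} ⋯ A_1, viewed as a matrix over ℂ, satisfies ‖μ‖ ≤ ε^k; in particular the spectral radius of A_k A_{k−1} ⋯ A_1 is at most ε^k < 1. -/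

import Mathlib

open Finset

/-- The companion matrix of a vector `a = (a 0, …, a (n-1))` (representing
`(a_{1}, …, a_{n})` in 1-indexed notation): superdiagonal of ones, last row
`(-a_n, -a_{n-1}, …, -a_1)`. -/
def companion (n : ℕ) (a : Fin n → ℝ) : Matrix (Fin n) (Fin n) ℝ :=
  Matrix.of fun j k =>
    if (j : ℕ) = n - 1 then -a k.rev
    else if (k : ℕ) = (j : ℕ) + 1 then 1 else 0

/-- `prodDesc A k = A k * A (k-1) * ⋯ * A 1`. -/
def prodDesc {m : ℕ} (A : ℕ → Matrix (Fin m) (Fin m) ℝ) : ℕ → Matrix (Fin m) (Fin m) ℝ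
  | 0 => 1
  | k + 1 => A (k + 1) * prodDesc A k

/-- The operator norm induced by the ℓ∞ norm: the maximum over rows of the ℓ¹ norm of
the row. -/
noncomputable def rowSumNorm {m : ℕ} (M : Matrix (Fin m) (Fin m) ℝ) : ℝ :=
  ⨆ j : Fin m, ∑ k : Fin m, |M j k|


noncomputable def psum (n : ℕ) (u : Fin n → ℂ) (j : ℕ) : ℂ :=
  ∑ t ∈ Finset.range j, (if h : t < n then u ⟨t, h⟩ else 0)

noncomputable def Nrm (n : ℕ) (u : Fin n → ℂ) : ℝ :=
  Finset.sup' (Finset.range (n+1) ×ˢ Finset.range (n+1)) ⟨(0,0), by simp⟩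
    fun pq => ‖psum n u pq.1 - psum n u pq.2‖

lemma Nrm_ge (n : ℕ) (u : Fin n → ℂ) {p q : ℕ} (hp : p ≤ n) (hq : q ≤ n) :
    ‖psum n u p - psum n u q‖ ≤ Nrm n u :=
  Finset.le_sup' (f := fun pq : ℕ × ℕ => ‖psum n u pq.1 - psum n u pq.2‖)
    (b := (p, q)) (by simp [Finset.mem_product]; omega)

lemma Nrm_nonneg (n : ℕ) (u : Fin n → ℂ) : 0 ≤ Nrm n u := by
  simpa using Nrm_ge n u (p := 0) (q := 0) (Nat.zero_le n) (Nat.zero_le n)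

lemma psum_succ (n : ℕ) (u : Fin n → ℂ) (t : ℕ) (h : t < n) :
    psum n u (t+1) = psum n u t + u ⟨t, h⟩ := by
  simp [psum, Finset.sum_range_succ, h]

lemma norm_le_Nrm (n : ℕ) (u : Fin n → ℂ) (t : Fin n) : ‖u t‖ ≤ Nrm n u := by
  have h := Nrm_ge n u (p := (t:ℕ)+1) (q := (t:ℕ)) t.2 (le_of_lt t.2)
  rw [psum_succ n u t t.2] at h
  simpa using h

lemma psum_smul (n : ℕ) (c : ℂ) (u : Fin n → ℂ) (j : ℕ) :
    psum n (c • u) j = c * psum n u j := by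
  unfold psum
  rw [Finset.mul_sum]
  refine Finset.sum_congr rfl fun t _ => ?_
  by_cases h : t < n <;> simp [h]

lemma Nrm_smul (n : ℕ) (c : ℂ) (u : Fin n → ℂ) : Nrm n (c • u) = ‖c‖ * Nrm n u := by
  have key : ∀ pq : ℕ × ℕ, ‖psum n (c • u) pq.1 - psum n (c • u) pq.2‖
      = ‖c‖ * ‖psum n u pq.1 - psum n u pq.2‖ := by
    intro pq; rw [psum_smul, psum_smul, ← mul_sub, norm_mul]
  apply le_antisymm
  · apply Finset.sup'_le
    intro pq hpq
    obtain ⟨h1, h2⟩ := Finset.mem_product.1 hpq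
    rw [key]
    exact mul_le_mul_of_nonneg_left
      (Nrm_ge n u (by simpa using Nat.lt_succ_iff.1 (Finset.mem_range.1 h1))
        (by simpa using Nat.lt_succ_iff.1 (Finset.mem_range.1 h2))) (norm_nonneg c)
  · rcases eq_or_ne c 0 with h | h
    · simp [h, Nrm_nonneg]
    · have hc : 0 < ‖c‖ := norm_pos_iff.2 h
      rw [mul_comm, ← le_div_iff₀ hc]
      apply Finset.sup'_le
      intro pq hpq
      obtain ⟨h1, h2⟩ := Finset.mem_product.1 hpq
      rw [le_div_iff₀ hc, mul_comm, ← key]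
      exact Nrm_ge n (c • u) (Nat.lt_succ_iff.1 (Finset.mem_range.1 h1))
        (Nat.lt_succ_iff.1 (Finset.mem_range.1 h2))

lemma contract (n : ℕ) (hn : 1 ≤ n) (B : ℕ → ℝ)
    (hB1 : B 0 ≤ 1) (hstep : ∀ t, B (t+1) ≤ B t) (hBpos : ∀ t, 0 ≤ B t) (hBn : B n = 0)
    (u : Fin n → ℂ) :
    Nrm n (((companion n (fun t : Fin n => B (t:ℕ))).map (fun x : ℝ => (x:ℂ))).mulVec u)
      ≤ Nrm n u := by
  have hn0 : 0 < n := hn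
  set w : Fin n → ℂ :=
    ((companion n (fun t : Fin n => B (t:ℕ))).map (fun x : ℝ => (x:ℂ))).mulVec u with hw
  set u0 : ℂ := u ⟨0, hn0⟩ with hu0
  set S : ℕ → ℂ := psum n u with hS
  -- last-row formula
  have hw2 : ∀ j : Fin n, (j:ℕ) = n - 1 →
      w j = -∑ k : Fin n, (B (n - ((k:ℕ)+1)) : ℂ) * u k := by
    intro j hj
    simp [hw, Matrix.mulVec, dotProduct, Matrix.map_apply, companion, hj]
  -- shift formula
  have hw1 : ∀ (t : ℕ) (h1 : t < n - 1), w ⟨t, by omega⟩ = u ⟨t+1, by omega⟩ := by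
    intro t h1
    have hne : ¬ (t = n - 1) := by omega
    simp only [hw, Matrix.mulVec, dotProduct, Matrix.map_apply, companion,
      Matrix.of_apply, hne, if_false]
    rw [Finset.sum_eq_single (⟨t+1, by omega⟩ : Fin n)]
    · simp
    · intro k _ hk
      have : ¬ ((k:ℕ) = t + 1) := fun h => hk (Fin.ext h)
      simp [this]
    · simp
  -- partial sums of w, up to n-1
  have hps : ∀ q, q ≤ n - 1 → psum n w q + u0 = S (q+1) := by
    intro q
    induction q with
    | zero => intro _; simp [psum, hS, hu0, hn0]
    | succ m ih =>
      intro hq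
      have e1 := ih (by omega)
      have e2 := hw1 m (by omega)
      rw [hS] at e1
      show psum n w (m+1) + u0 = psum n u (m+1+1)
      rw [psum_succ n w m (by omega), psum_succ n u (m+1) (by omega), e2]
      linear_combination e1
  -- coefficients
  set c : ℕ → ℝ := fun l => (if l = n then 1 else B (n-1-l)) - B (n-l) with hc
  have hcnn : ∀ l, l ≤ n → 0 ≤ c l := by
    intro l hl
    rcases eq_or_lt_of_le hl with h | h
    · simp [hc, h, hBn]; linarith
    · have hln : ¬ (l = n) := by omega
      have : n - l = (n - 1 - l) + 1 := by omega
      simp only [hc, hln, if_false, this]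
      linarith [hstep (n - 1 - l)]
  have hd_sum : ∀ (f : ℕ → ℂ), ∑ l ∈ Finset.range (n+1),
      ((if l = n then (1:ℝ) else B (n-1-l)) : ℂ) * f l
      = (∑ l ∈ Finset.range n, (B (n-1-l) : ℂ) * f l) + f n := by
    intro f
    rw [Finset.sum_range_succ]
    congr 1
    · refine Finset.sum_congr rfl fun l hl => ?_
      have : ¬ (l = n) := by have := Finset.mem_range.1 hl; omega
      simp [this]
    · simp
  have hb_sum : ∀ (f : ℕ → ℂ), f 0 = 0 → ∑ l ∈ Finset.range (n+1), (B (n-l) : ℂ) * f l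
      = ∑ l ∈ Finset.range n, (B (n-1-l) : ℂ) * f (l+1) := by
    intro f hf0
    rw [Finset.sum_range_succ']
    simp only [hf0, mul_zero, add_zero]
    refine Finset.sum_congr rfl fun l hl => ?_
    have : n - (l+1) = n - 1 - l := by omega
    rw [this]
  have hcsum : ∑ l ∈ Finset.range (n+1), c l = 1 := by
    simp only [hc, Finset.sum_sub_distrib]
    have e1 : ∑ l ∈ Finset.range (n+1), (if l = n then (1:ℝ) else B (n-1-l))
        = (∑ l ∈ Finset.range n, B (n-1-l)) + 1 := by
      rw [Finset.sum_range_succ]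
      congr 1
      · refine Finset.sum_congr rfl fun l hl => ?_
        have : ¬ (l = n) := by have := Finset.mem_range.1 hl; omega
        simp [this]
      · simp
    have e2 : ∑ l ∈ Finset.range (n+1), B (n-l)
        = (∑ l ∈ Finset.range n, B (n-1-l)) + 0 := by
      rw [Finset.sum_range_succ']
      have h8 : ∀ l : ℕ, B (n - (l+1)) = B (n-1-l) := fun l => by
        congr 1
        omega
      simp only [h8, Nat.sub_zero, hBn, add_zero]
    rw [e1, e2]; ring
  -- representation of psum w n
  have hrep : psum n w n + u0 = ∑ l ∈ Finset.range (n+1), (c l : ℂ) * S l := by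
    have e1 : psum n w n = psum n w (n-1) + w ⟨n-1, by omega⟩ := by
      have := psum_succ n w (n-1) (by omega)
      rwa [show n - 1 + 1 = n by omega] at this
    have e2 : ∀ (l : ℕ) (hl : l < n), S (l+1) - S l = u ⟨l, hl⟩ := by
      intro l hl
      rw [hS, psum_succ n u l hl]; ring
    have e3 : ∑ l ∈ Finset.range (n+1), (c l : ℂ) * S l
        = S n - ∑ l ∈ Finset.range n, (B (n-1-l) : ℂ) * (S (l+1) - S l) := by
      have hsplit : ∀ l, (c l : ℂ) * S l
          = ((if l = n then (1:ℝ) else B (n-1-l)) : ℂ) * S l - (B (n-l) : ℂ) * S l := by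
        intro l
        rw [hc]
        push_cast [apply_ite (fun x : ℝ => (x : ℂ))]
        ring
      rw [Finset.sum_congr rfl fun l _ => hsplit l, Finset.sum_sub_distrib,
        hd_sum S, hb_sum S (by simp [hS, psum])]
      simp only [mul_sub, Finset.sum_sub_distrib]
      ring
    rw [e3]
    have e4 : ∑ l ∈ Finset.range n, (B (n-1-l) : ℂ) * (S (l+1) - S l)
        = ∑ k : Fin n, (B (n - ((k:ℕ)+1)) : ℂ) * u k := by
      rw [← Fin.sum_univ_eq_sum_range (fun l => (B (n-1-l) : ℂ) * (S (l+1) - S l)) n]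
      refine Finset.sum_congr rfl fun k _ => ?_
      rw [e2 k k.2]
      have h7 : n - 1 - (k:ℕ) = n - ((k:ℕ)+1) := by omega
      rw [h7]
    rw [e4, e1, hw2 ⟨n-1, by omega⟩ rfl]
    have e5 := hps (n-1) le_rfl
    rw [show n - 1 + 1 = n by omega] at e5
    calc psum n w (n-1) + -(∑ k : Fin n, (B (n - ((k:ℕ)+1)) : ℂ) * u k) + u0
        = (psum n w (n-1) + u0) - ∑ k : Fin n, (B (n - ((k:ℕ)+1)) : ℂ) * u k := by ring
    _ = S n - ∑ k : Fin n, (B (n - ((k:ℕ)+1)) : ℂ) * u k := by rw [e5]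
  -- key pointwise bound
  have key : ∀ q, q ≤ n → ∀ y : ℂ, (∀ l, l ≤ n → ‖S l - y‖ ≤ Nrm n u) →
      ‖psum n w q + u0 - y‖ ≤ Nrm n u := by
    intro q hq y hy
    rcases Nat.lt_or_ge q n with h | h
    · rw [hps q (by omega)]
      exact hy (q+1) (by omega)
    · have hqn : q = n := by omega
      rw [hqn, hrep]
      have hone : (∑ l ∈ Finset.range (n+1), (c l : ℂ)) = 1 := by
        rw [← Complex.ofReal_sum, hcsum, Complex.ofReal_one]
      have e6 : ∑ l ∈ Finset.range (n+1), (c l : ℂ) * S l - y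
          = ∑ l ∈ Finset.range (n+1), (c l : ℂ) * (S l - y) := by
        simp only [mul_sub, Finset.sum_sub_distrib, ← Finset.sum_mul, hone, one_mul]
      rw [e6]
      calc ‖∑ l ∈ Finset.range (n+1), (c l : ℂ) * (S l - y)‖
          ≤ ∑ l ∈ Finset.range (n+1), ‖(c l : ℂ) * (S l - y)‖ := norm_sum_le _ _
      _ ≤ ∑ l ∈ Finset.range (n+1), c l * Nrm n u := by
          refine Finset.sum_le_sum fun l hl => ?_
          have hln : l ≤ n := by have := Finset.mem_range.1 hl; omega
          rw [norm_mul, Complex.norm_real, Real.norm_eq_abs, abs_of_nonneg (hcnn l hln)]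
          exact mul_le_mul_of_nonneg_left (hy l hln) (hcnn l hln)
      _ = Nrm n u := by rw [← Finset.sum_mul, hcsum, one_mul]
  -- conclusion
  apply Finset.sup'_le
  intro pq hpq
  obtain ⟨h1, h2⟩ := Finset.mem_product.1 hpq
  have hp : pq.1 ≤ n := Nat.lt_succ_iff.1 (Finset.mem_range.1 h1)
  have hq : pq.2 ≤ n := Nat.lt_succ_iff.1 (Finset.mem_range.1 h2)
  have haux : ∀ l, l ≤ n → ‖S l - (psum n w pq.2 + u0)‖ ≤ Nrm n u := by
    intro l hl
    rw [norm_sub_rev]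
    exact key pq.2 hq (S l) (fun l' hl' => Nrm_ge n u hl' hl)
  have hfin := key pq.1 hp _ haux
  have hre : psum n w pq.1 - psum n w pq.2
      = psum n w pq.1 + u0 - (psum n w pq.2 + u0) := by ring
  rw [hre]
  exact hfin

lemma conj_step (n : ℕ) (ε : ℝ) (hε : ε ≠ 0) (av : Fin n → ℝ) :
    companion n av * Matrix.diagonal (fun j : Fin n => ε ^ (j:ℕ)) =
      ε • (Matrix.diagonal (fun j : Fin n => ε ^ (j:ℕ)) *
        companion n (fun t : Fin n => av t / ε ^ ((t:ℕ)+1))) := by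
  ext j l
  rw [Matrix.mul_diagonal, Matrix.smul_apply, Matrix.diagonal_mul]
  simp only [companion, Matrix.of_apply]
  by_cases hj : (j:ℕ) = n - 1
  · simp only [hj, if_pos rfl, if_true, smul_eq_mul]
    have hl : (l.rev : ℕ) = n - ((l:ℕ) + 1) := Fin.val_rev l
    have h1 : (l:ℕ) < n := l.2
    have h2 : n - ((l:ℕ) + 1) + 1 = n - (l:ℕ) := by omega
    rw [hl, h2]
    have h3 : ε ^ ((l:ℕ)) * ε ^ (n - (l:ℕ)) = ε * ε ^ (n-1) := by
      rw [← pow_add, show (l:ℕ) + (n - (l:ℕ)) = n by omega,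
        show ε * ε ^ (n-1) = ε ^ (n-1+1) by rw [pow_succ]; ring,
        show n - 1 + 1 = n by omega]
    have h4 : ε ^ (n - (l:ℕ)) ≠ 0 := pow_ne_zero _ hε
    rw [← mul_assoc, ← h3]
    field_simp
  · simp only [hj, if_neg hj]
    by_cases hk : (l:ℕ) = (j:ℕ)+1
    · simp [hk, if_pos rfl, pow_succ, smul_eq_mul]
      ring
    · simp [hk]

lemma conj_prod (n : ℕ) (ε : ℝ) (E : Matrix (Fin n) (Fin n) ℝ)
    (A Atil : ℕ → Matrix (Fin n) (Fin n) ℝ)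
    (h : ∀ i, A i * E = ε • (E * Atil i)) :
    ∀ m, prodDesc A m * E = ε ^ m • (E * prodDesc Atil m) := by
  intro m
  induction m with
  | zero => simp [prodDesc]
  | succ m ih =>
    show (A (m+1) * prodDesc A m) * E = ε ^ (m+1) • (E * (Atil (m+1) * prodDesc Atil m))
    rw [mul_assoc, ih, Matrix.mul_smul, ← mul_assoc, h (m+1), Matrix.smul_mul, smul_smul,
      mul_assoc, pow_succ]

lemma map_mul' {n : ℕ} (M N : Matrix (Fin n) (Fin n) ℝ) :
    (M * N).map (fun x : ℝ => (x:ℂ)) = M.map (fun x : ℝ => (x:ℂ)) * N.map (fun x : ℝ => (x:ℂ)) := by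
  ext i j
  simp [Matrix.map_apply, Matrix.mul_apply]

lemma map_smul' {n : ℕ} (c : ℝ) (M : Matrix (Fin n) (Fin n) ℝ) :
    (c • M).map (fun x : ℝ => (x:ℂ)) = (c : ℂ) • M.map (fun x : ℝ => (x:ℂ)) := by
  ext i j
  simp [Matrix.map_apply]

/-- Lemma 4 of the paper (Key's spectral-radius bound for products of companion
matrices with strictly decreasing nonnegative coefficient chains). Coefficients are
given as `a i j` for `1 ≤ j ≤ n`, with the convention `a i 0 = 1`. -/
theorem stmt_16 (n : ℕ) (hn : 1 ≤ n) (k : ℕ) (hk : 1 ≤ k) (a : ℕ → ℕ → ℝ)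
    (ha0 : ∀ i : ℕ, a i 0 = 1)
    (hchain : ∀ i : ℕ, 1 ≤ i → i ≤ k → ∀ j : ℕ, 1 ≤ j → j ≤ n → a i j < a i (j - 1))
    (hnonneg : ∀ i : ℕ, 1 ≤ i → i ≤ k → 0 ≤ a i n)
    (ε : ℝ)
    (hε : IsGreatest
      {x : ℝ | ∃ i, 1 ≤ i ∧ i ≤ k ∧ ∃ j, 1 ≤ j ∧ j ≤ n ∧ x = a i j / a i (j - 1)} ε) :
    ε < 1 ∧
      ∀ (μ : ℂ) (v : Fin n → ℂ), v ≠ 0 →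
        Matrix.mulVec
          ((prodDesc (fun i => companion n (fun j : Fin n => a i ((j : ℕ) + 1))) k).map
            (fun x : ℝ => (x : ℂ))) v = μ • v →
        ‖μ‖ ≤ ε ^ k := by
  have hn0 : 0 < n := hn
  -- monotonicity of the chains
  have hanti : ∀ i, 1 ≤ i → i ≤ k → ∀ j j' : ℕ, j ≤ j' → j' ≤ n → a i j' ≤ a i j := by
    intro i h1 h2 j j'
    induction j' with
    | zero => intro h _; have : j = 0 := by omega
              simp [this]
    | succ m ih =>
      intro hjj' hj'n
      rcases Nat.eq_or_lt_of_le hjj' with h | h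
      · rw [h]
      · have hlt : a i (m+1) < a i m := by
          have := hchain i h1 h2 (m+1) (by omega) hj'n
          simpa using this
        exact le_trans hlt.le (ih (by omega) (by omega))
  have hpos : ∀ i, 1 ≤ i → i ≤ k → ∀ j, j ≤ n - 1 → 0 < a i j := by
    intro i h1 h2 j hj
    have h3 := hnonneg i h1 h2
    have h4 := hchain i h1 h2 n (by omega) le_rfl
    have h5 := hanti i h1 h2 j (n-1) hj (by omega)
    rw [show n - 1 = n - 1 by rfl] at h4
    linarith
  have hub : ∀ i, 1 ≤ i → i ≤ k → ∀ j, 1 ≤ j → j ≤ n → a i j ≤ ε * a i (j-1) := by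
    intro i h1 h2 j hj1 hjn
    have hmem : a i j / a i (j-1) ≤ ε := hε.2 ⟨i, h1, h2, j, hj1, hjn, rfl⟩
    have hd : 0 < a i (j-1) := hpos i h1 h2 (j-1) (by omega)
    calc a i j = (a i j / a i (j-1)) * a i (j-1) := by field_simp
    _ ≤ ε * a i (j-1) := mul_le_mul_of_nonneg_right hmem hd.le
  have hε1 : ε < 1 := by
    obtain ⟨i, h1, h2, j, hj1, hjn, hx⟩ := hε.1
    have hd : 0 < a i (j-1) := hpos i h1 h2 (j-1) (by omega)
    rw [hx, div_lt_one hd]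
    exact hchain i h1 h2 j hj1 hjn
  have hεnn : 0 ≤ ε := by
    obtain ⟨i, h1, h2, j, hj1, hjn, hx⟩ := hε.1
    have hd : 0 < a i (j-1) := hpos i h1 h2 (j-1) (by omega)
    have hnum : 0 ≤ a i j := le_trans (hnonneg i h1 h2) (hanti i h1 h2 j n hjn le_rfl)
    rw [hx]
    exact div_nonneg hnum hd.le
  refine ⟨hε1, ?_⟩
  intro μ v hv hmul
  rcases eq_or_lt_of_le hεnn with hε0 | hεpos
  · -- degenerate case ε = 0; forces n = 1 and zero matrices
    have hn1 : n = 1 := by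
      by_contra hne
      have h2n : 2 ≤ n := by omega
      have e1 : a 1 1 ≤ 0 := by
        have := hub 1 le_rfl hk 1 le_rfl (by omega)
        rw [← hε0, ha0] at this
        linarith
      have e2 : 0 < a 1 1 := hpos 1 le_rfl hk 1 (by omega)
      linarith
    subst hn1
    have hak : a k 1 = 0 := by
      have e1 : a k 1 ≤ 0 := by
        have := hub k hk le_rfl 1 le_rfl le_rfl
        rw [← hε0, ha0] at this
        linarith
      have e2 : 0 ≤ a k 1 := le_trans (hnonneg k hk le_rfl) (hanti k hk le_rfl 1 1 le_rfl le_rfl)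
      linarith
    have hAk : companion 1 (fun j : Fin 1 => a k ((j:ℕ)+1)) = 0 := by
      ext j l
      fin_cases j
      fin_cases l
      simp [companion, hak]
    have hP : prodDesc (fun i => companion 1 fun j : Fin 1 => a i ((j:ℕ)+1)) k = 0 := by
      obtain ⟨k', rfl⟩ : ∃ k', k = k' + 1 := ⟨k-1, by omega⟩
      show companion 1 (fun j : Fin 1 => a (k'+1) ((j:ℕ)+1)) * _ = 0
      rw [hAk]
      exact zero_mul _
    rw [hP] at hmul
    simp only [Matrix.map_zero _ Complex.ofReal_zero, Matrix.zero_mulVec] at hmul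
    rcases smul_eq_zero.1 hmul.symm with h | h
    · rw [h, ← hε0]
      simp [zero_pow (by omega : k ≠ 0)]
    · exact absurd h hv
  · -- main case ε > 0
    have hεne : ε ≠ 0 := ne_of_gt hεpos
    set b : ℕ → ℕ → ℝ := fun i t => if t < n then a i (t+1) / ε ^ (t+1) else 0 with hbdef
    set A : ℕ → Matrix (Fin n) (Fin n) ℝ :=
      fun i => companion n (fun j : Fin n => a i ((j:ℕ)+1)) with hAdef
    set Atil : ℕ → Matrix (Fin n) (Fin n) ℝ :=
      fun i => companion n (fun t : Fin n => b i (t:ℕ)) with hAtil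
    set E : Matrix (Fin n) (Fin n) ℝ := Matrix.diagonal (fun j : Fin n => ε ^ (j:ℕ)) with hE
    have hconj : ∀ i, A i * E = ε • (E * Atil i) := by
      intro i
      have h9 : (fun t : Fin n => b i (t:ℕ))
          = fun t : Fin n => (a i ((t:ℕ)+1)) / ε ^ ((t:ℕ)+1) := by
        funext t
        simp [hbdef, t.2]
      show companion n (fun j : Fin n => a i ((j:ℕ)+1)) * E
          = ε • (E * companion n (fun t : Fin n => b i (t:ℕ)))
      rw [h9]
      exact conj_step n ε hεne _
    have hprod : prodDesc A k * E = ε ^ k • (E * prodDesc Atil k) :=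
      conj_prod n ε E A Atil hconj k
    -- move to ℂ
    have hmapped := congrArg (fun M : Matrix (Fin n) (Fin n) ℝ =>
      M.map (fun x : ℝ => (x:ℂ))) hprod
    simp only [map_mul', map_smul'] at hmapped
    have hEmap : E.map (fun x : ℝ => (x:ℂ))
        = Matrix.diagonal (fun j : Fin n => ((ε:ℂ)) ^ (j:ℕ)) := by
      rw [hE, Matrix.diagonal_map Complex.ofReal_zero]
      congr 1
      funext j
      push_cast
      rfl
    rw [hEmap] at hmapped
    set Ec : Matrix (Fin n) (Fin n) ℂ :=
      Matrix.diagonal (fun j : Fin n => ((ε:ℂ)) ^ (j:ℕ)) with hEc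
    set Pc : Matrix (Fin n) (Fin n) ℂ := (prodDesc A k).map (fun x : ℝ => (x:ℂ)) with hPc
    set Qc : Matrix (Fin n) (Fin n) ℂ := (prodDesc Atil k).map (fun x : ℝ => (x:ℂ)) with hQc
    -- hmapped : Pc * Ec = (ε^k : ℂ) • (Ec * Qc)
    have hεcne : ∀ j : Fin n, ((ε:ℂ)) ^ (j:ℕ) ≠ 0 :=
      fun j => pow_ne_zero _ (Complex.ofReal_ne_zero.2 hεne)
    set u : Fin n → ℂ := fun j => (((ε:ℂ)) ^ (j:ℕ))⁻¹ * v j with hu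
    have hvu : Ec.mulVec u = v := by
      funext j
      rw [hEc, Matrix.mulVec_diagonal, hu]
      rw [← mul_assoc, mul_inv_cancel₀ (hεcne j), one_mul]
    have hu0 : u ≠ 0 := by
      intro h
      apply hv
      rw [← hvu, h, Matrix.mulVec_zero]
    have heig : ((ε ^ k : ℝ) : ℂ) • Qc.mulVec u = μ • u := by
      have e1 : Ec.mulVec (((ε ^ k : ℝ) : ℂ) • Qc.mulVec u) = Ec.mulVec (μ • u) := by
        rw [Matrix.mulVec_smul, Matrix.mulVec_smul, Matrix.mulVec_mulVec,
          ← Matrix.smul_mulVec, ← hmapped, ← Matrix.mulVec_mulVec, hvu, hmul]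
      funext j
      have e2 := congrFun e1 j
      rw [hEc, Matrix.mulVec_diagonal, Matrix.mulVec_diagonal] at e2
      exact mul_left_cancel₀ (hεcne j) e2
    -- contraction
    have hcontr : ∀ m, m ≤ k → ∀ z : Fin n → ℂ,
        Nrm n (((prodDesc Atil m).map (fun x : ℝ => (x:ℂ))).mulVec z) ≤ Nrm n z := by
      intro m
      induction m with
      | zero =>
        intro _ z
        rw [show prodDesc Atil 0 = 1 from rfl,
          Matrix.map_one _ Complex.ofReal_zero Complex.ofReal_one, Matrix.one_mulVec]
      | succ m ih =>
        intro hm z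
        rw [show prodDesc Atil (m+1) = Atil (m+1) * prodDesc Atil m from rfl, map_mul',
          ← Matrix.mulVec_mulVec]
        refine le_trans ?_ (ih (by omega) z)
        have hb1 : b (m+1) 0 ≤ 1 := by
          have := hub (m+1) (by omega) (by omega) 1 le_rfl (by omega)
          rw [ha0] at this
          simp only [hbdef, hn0, if_pos hn0]
          rw [pow_one, div_le_one hεpos]
          linarith
        have hstep : ∀ t, b (m+1) (t+1) ≤ b (m+1) t := by
          intro t
          by_cases h1 : t+1 < n
          · have h2 : t < n := by omega
            simp only [hbdef, h1, h2, if_pos]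
            rw [div_le_div_iff₀ (pow_pos hεpos _) (pow_pos hεpos _)]
            have h3 := hub (m+1) (by omega) (by omega) (t+2) (by omega) (by omega)
            have h4 : a (m+1) (t+2-1) = a (m+1) (t+1) := by norm_num
            rw [h4] at h3
            calc a (m+1) (t+1+1) * ε ^ (t+1)
                ≤ (ε * a (m+1) (t+1)) * ε ^ (t+1) := by
                  exact mul_le_mul_of_nonneg_right (by exact_mod_cast h3) (by positivity)
            _ = a (m+1) (t+1) * ε ^ (t+1+1) := by ring
          · simp only [hbdef, h1, if_neg h1]
            by_cases h2 : t < n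
            · simp only [h2, if_pos h2]
              apply div_nonneg _ (by positivity)
              exact le_trans (hnonneg (m+1) (by omega) (by omega))
                (hanti (m+1) (by omega) (by omega) (t+1) n (by omega) le_rfl)
            · simp [h2]
        have hbpos : ∀ t, 0 ≤ b (m+1) t := by
          intro t
          by_cases h2 : t < n
          · simp only [hbdef, h2, if_pos h2]
            apply div_nonneg _ (by positivity)
            exact le_trans (hnonneg (m+1) (by omega) (by omega))
              (hanti (m+1) (by omega) (by omega) (t+1) n (by omega) le_rfl)
          · simp [hbdef, h2]
        have hbn : b (m+1) n = 0 := by simp [hbdef]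
        exact contract n hn (b (m+1)) hb1 hstep hbpos hbn _
    -- finish
    have h1 := hcontr k le_rfl u
    rw [← hQc] at h1
    have h2 : ‖μ‖ * Nrm n u ≤ ε ^ k * Nrm n u := by
      calc ‖μ‖ * Nrm n u = Nrm n (μ • u) := (Nrm_smul n μ u).symm
      _ = Nrm n (((ε ^ k : ℝ) : ℂ) • Qc.mulVec u) := by rw [heig]
      _ = ‖((ε ^ k : ℝ) : ℂ)‖ * Nrm n (Qc.mulVec u) := Nrm_smul n _ _
      _ = ε ^ k * Nrm n (Qc.mulVec u) := by
          rw [Complex.norm_real, Real.norm_eq_abs, abs_of_nonneg (by positivity)]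
      _ ≤ ε ^ k * Nrm n u := mul_le_mul_of_nonneg_left h1 (by positivity)
    have h4 : 0 < Nrm n u := by
      obtain ⟨t, ht⟩ := Function.ne_iff.1 hu0
      exact lt_of_lt_of_le (norm_pos_iff.2 ht) (norm_le_Nrm n u t)
    exact le_of_mul_le_mul_right h2 h4
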